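/- Let ρ and σ be density operators on a finite-dimensional complex Hilbert space with supp(ρ) ⊆ supp(σ), let α > 1 with conjugate index α' = α/(α−1), and let T be a positive semidefinite operator with Tr[ρT] > 0. Then Tr[ρT] ≤ exp( ((α−1)/α) D_α^*(ρ‖σ) ) · ( Tr[( σ^{1/(2α')} T σ^{1/(2α')} )^{α'}] )^{1/α'}; equivalently, D_α^*(ρ‖σ) ≥ α' log Tr[ρT] − log Tr[( σ^{1/(2α')} T σ^{1/(2α')} )^{α'}]. -/

import Mathlib

open Matrix
open scoped ComplexOrder Kronecker

noncomputable section

/-- Real power of a Hermitian matrix via functional calculus on its support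
(Moore–Penrose convention); junk value `0` for non-Hermitian input. -/
def Matrix.rpowH {ι : Type*} [Fintype ι] [DecidableEq ι] (A : Matrix ι ι ℂ) (p : ℝ) :
    Matrix ι ι ℂ :=
  if hA : A.IsHermitian then
    (hA.eigenvectorUnitary : Matrix ι ι ℂ) *
      Matrix.diagonal (fun i => ((hA.eigenvalues i ^ p : ℝ) : ℂ)) *
      star (hA.eigenvectorUnitary : Matrix ι ι ℂ)
  else 0

/-- Real part of the trace. -/
def retr {ι : Type*} [Fintype ι] (A : Matrix ι ι ℂ) : ℝ :=
  (Matrix.trace A).re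

/-- Sandwiched Rényi divergence
`D_α^*(ρ‖σ) = (α-1)⁻¹ log Tr[(σ^{(1-α)/(2α)} ρ σ^{(1-α)/(2α)})^α]`. -/
def sandwichedRenyiDiv {ι : Type*} [Fintype ι] [DecidableEq ι]
    (α : ℝ) (ρ σ : Matrix ι ι ℂ) : ℝ :=
  (α - 1)⁻¹ * Real.log (retr (Matrix.rpowH
    (Matrix.rpowH σ ((1 - α) / (2 * α)) * ρ * Matrix.rpowH σ ((1 - α) / (2 * α))) α))


namespace SandwichAux

variable {ι : Type*} [Fintype ι] [DecidableEq ι]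

lemma rpowH_eq {A : Matrix ι ι ℂ} (hA : A.IsHermitian) (p : ℝ) :
    A.rpowH p = (hA.eigenvectorUnitary : Matrix ι ι ℂ) *
      Matrix.diagonal (fun i => ((hA.eigenvalues i ^ p : ℝ) : ℂ)) *
      star (hA.eigenvectorUnitary : Matrix ι ι ℂ) := by
  rw [Matrix.rpowH, dif_pos hA]

lemma conj_mul_conj (U D₁ D₂ : Matrix ι ι ℂ) (hU : star U * U = 1) :
    (U * D₁ * star U) * (U * D₂ * star U) = U * (D₁ * D₂) * star U := by
  calc (U * D₁ * star U) * (U * D₂ * star U)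
      = U * D₁ * (star U * U) * D₂ * star U := by simp only [Matrix.mul_assoc]
    _ = U * (D₁ * D₂) * star U := by rw [hU]; simp only [Matrix.mul_assoc, Matrix.mul_one]

lemma trace_conj (U D : Matrix ι ι ℂ) (hU : star U * U = 1) :
    Matrix.trace (U * D * star U) = Matrix.trace D := by
  rw [Matrix.trace_mul_cycle, hU, Matrix.one_mul]

lemma retr_rpowH {A : Matrix ι ι ℂ} (hA : A.IsHermitian) (p : ℝ) :
    retr (A.rpowH p) = ∑ i, hA.eigenvalues i ^ p := by
  rw [retr, rpowH_eq hA p, trace_conj _ _ (Unitary.coe_star_mul_self _),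
    Matrix.trace_diagonal, Complex.re_sum]
  simp

lemma rpowH_posSemidef {A : Matrix ι ι ℂ} (hA : A.PosSemidef) (p : ℝ) :
    (A.rpowH p).PosSemidef := by
  rw [rpowH_eq hA.isHermitian p]
  have hd : (Matrix.diagonal (fun i => ((hA.isHermitian.eigenvalues i ^ p : ℝ) : ℂ))).PosSemidef :=
    Matrix.posSemidef_diagonal_iff.mpr fun i => by
      rw [Complex.zero_le_real]
      exact Real.rpow_nonneg (hA.eigenvalues_nonneg i) p
  have := hd.mul_mul_conjTranspose_same (hA.isHermitian.eigenvectorUnitary : Matrix ι ι ℂ)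
  simpa [Matrix.star_eq_conjTranspose] using this

lemma retr_rpowH_nonneg {A : Matrix ι ι ℂ} (hA : A.PosSemidef) (p : ℝ) :
    0 ≤ retr (A.rpowH p) := by
  rw [retr_rpowH hA.isHermitian p]
  exact Finset.sum_nonneg fun i _ => Real.rpow_nonneg (hA.eigenvalues_nonneg i) p


lemma trace_diag_sandwich (d e : ι → ℝ) (M : Matrix ι ι ℂ) :
    Matrix.trace (Matrix.diagonal (fun i => (d i : ℂ)) *
        (M * Matrix.diagonal (fun j => (e j : ℂ)) * star M))
      = ((∑ i, ∑ j, d i * e j * Complex.normSq (M i j) : ℝ) : ℂ) := by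
  have hNi : ∀ i, (M * Matrix.diagonal (fun j => (e j : ℂ)) * star M) i i
      = ∑ j, (e j : ℂ) * (Complex.normSq (M i j) : ℂ) := by
    intro i
    rw [Matrix.mul_apply]
    refine Finset.sum_congr rfl fun j _ => ?_
    rw [Matrix.mul_diagonal, Matrix.star_apply]
    rw [mul_comm (M i j) ((e j : ℂ)), mul_assoc]
    congr 1
    rw [Complex.star_def, Complex.mul_conj]
  have : Matrix.trace (Matrix.diagonal (fun i => (d i : ℂ)) *
      (M * Matrix.diagonal (fun j => (e j : ℂ)) * star M))
      = ∑ i, (d i : ℂ) * ∑ j, (e j : ℂ) * (Complex.normSq (M i j) : ℂ) := by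
    rw [Matrix.trace]
    refine Finset.sum_congr rfl fun i _ => ?_
    rw [Matrix.diag, Matrix.diagonal_mul, hNi i]
  rw [this]
  push_cast
  refine Finset.sum_congr rfl fun i _ => ?_
  rw [Finset.mul_sum]
  refine Finset.sum_congr rfl fun j _ => ?_
  ring

lemma trace_holder {A B : Matrix ι ι ℂ} (hA : A.PosSemidef) (hB : B.PosSemidef)
    {p q : ℝ} (hpq : Real.HolderConjugate p q) :
    retr (A * B) ≤ (retr (A.rpowH p)) ^ (1/p) * (retr (B.rpowH q)) ^ (1/q) := by
  classical
  have hp0 : p ≠ 0 := by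
    have := hpq.lt; intro h; rw [h] at this; linarith
  have hq0 : q ≠ 0 := by
    have := hpq.symm.lt; intro h; rw [h] at this; linarith
  have hsum1 : 1/p + 1/q = 1 := by simpa [one_div] using hpq.inv_add_inv_eq_one
  set U : Matrix ι ι ℂ := (hA.isHermitian.eigenvectorUnitary : Matrix ι ι ℂ) with hU
  set V : Matrix ι ι ℂ := (hB.isHermitian.eigenvectorUnitary : Matrix ι ι ℂ) with hV
  set a : ι → ℝ := hA.isHermitian.eigenvalues with ha
  set b : ι → ℝ := hB.isHermitian.eigenvalues with hb
  set W : Matrix ι ι ℂ := star U * V with hW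
  have hUU : star U * U = 1 := by rw [hU]; exact Unitary.coe_star_mul_self _
  have hUU' : U * star U = 1 := by rw [hU]; exact Unitary.coe_mul_star_self _
  have hVV : star V * V = 1 := by rw [hV]; exact Unitary.coe_star_mul_self _
  have hVV' : V * star V = 1 := by rw [hV]; exact Unitary.coe_mul_star_self _
  have hWW : W * star W = 1 := by
    rw [hW, Matrix.star_mul, star_star]
    calc star U * V * (star V * U) = star U * (V * star V) * U := by
          simp only [Matrix.mul_assoc]
      _ = 1 := by rw [hVV', Matrix.mul_one, hUU]
  have hWW' : star W * W = 1 := by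
    rw [hW, Matrix.star_mul, star_star]
    calc star V * U * (star U * V) = star V * (U * star U) * V := by
          simp only [Matrix.mul_assoc]
      _ = 1 := by rw [hUU', Matrix.mul_one, hVV]
  set c : ι → ι → ℝ := fun i j => Complex.normSq (W i j) with hc
  have hc0 : ∀ i j, 0 ≤ c i j := fun i j => Complex.normSq_nonneg _
  have hrow : ∀ i, ∑ j, c i j = 1 := by
    intro i
    have h1 : (W * star W) i i = 1 := by rw [hWW, Matrix.one_apply_eq]
    rw [Matrix.mul_apply] at h1
    have h2 : ∑ j, W i j * star W j i = ((∑ j, c i j : ℝ) : ℂ) := by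
      push_cast
      refine Finset.sum_congr rfl fun j _ => ?_
      rw [Matrix.star_apply, Complex.star_def, Complex.mul_conj]
    rw [h2] at h1
    exact_mod_cast h1
  have hcol : ∀ j, ∑ i, c i j = 1 := by
    intro j
    have h1 : (star W * W) j j = 1 := by rw [hWW', Matrix.one_apply_eq]
    rw [Matrix.mul_apply] at h1
    have h2 : ∑ i, star W j i * W i j = ((∑ i, c i j : ℝ) : ℂ) := by
      push_cast
      refine Finset.sum_congr rfl fun i _ => ?_
      rw [Matrix.star_apply, Complex.star_def, mul_comm, Complex.mul_conj]
    rw [h2] at h1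
    exact_mod_cast h1
  have hAeq : A = U * Matrix.diagonal (fun i => (a i : ℂ)) * star U := by
    rw [hU, ha]
    exact hA.isHermitian.spectral_theorem
  have hBeq : B = V * Matrix.diagonal (fun j => (b j : ℂ)) * star V := by
    rw [hV, hb]
    exact hB.isHermitian.spectral_theorem
  have hmat : A * B = U * (Matrix.diagonal (fun i => (a i : ℂ)) *
      (W * Matrix.diagonal (fun j => (b j : ℂ)) * star W)) * star U := by
    rw [hAeq, hBeq, hW, Matrix.star_mul, star_star]
    simp only [← Matrix.mul_assoc]
    rw [Matrix.mul_assoc _ U (star U), hUU', Matrix.mul_one]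
  have key : Matrix.trace (A * B) = ((∑ i, ∑ j, a i * b j * c i j : ℝ) : ℂ) := by
    rw [hmat, trace_conj _ _ hUU, trace_diag_sandwich]
  have hre : retr (A * B) = ∑ i, ∑ j, a i * b j * c i j := by
    rw [retr, key, Complex.ofReal_re]
  have hcsplit : ∀ t : ℝ, 0 ≤ t → t ^ (1/p) * t ^ (1/q) = t := by
    intro t ht
    rw [← Real.rpow_add' ht (by rw [hsum1]; norm_num), hsum1, Real.rpow_one]
  have happ := Real.inner_le_Lp_mul_Lq_of_nonneg (s := (Finset.univ : Finset (ι × ι)))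
      (f := fun x : ι × ι => (c x.1 x.2) ^ (1/p) * a x.1)
      (g := fun x : ι × ι => (c x.1 x.2) ^ (1/q) * b x.2) hpq
      (fun x _ => mul_nonneg (Real.rpow_nonneg (hc0 _ _) _) (ha ▸ hA.eigenvalues_nonneg x.1))
      (fun x _ => mul_nonneg (Real.rpow_nonneg (hc0 _ _) _) (hb ▸ hB.eigenvalues_nonneg x.2))
  have hlhs : ∑ x : ι × ι, ((c x.1 x.2) ^ (1/p) * a x.1) * ((c x.1 x.2) ^ (1/q) * b x.2)
      = retr (A * B) := by
    rw [hre, Fintype.sum_prod_type]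
    refine Finset.sum_congr rfl fun i _ => Finset.sum_congr rfl fun j _ => ?_
    rw [mul_mul_mul_comm, hcsplit _ (hc0 i j)]
    ring
  have hsumfp : ∑ x : ι × ι, ((c x.1 x.2) ^ (1/p) * a x.1) ^ p = retr (A.rpowH p) := by
    rw [retr_rpowH hA.isHermitian, Fintype.sum_prod_type]
    refine Finset.sum_congr rfl fun i _ => ?_
    have hterm : ∀ j, ((c i j) ^ (1/p) * a i) ^ p = c i j * a i ^ p := by
      intro j
      rw [Real.mul_rpow (Real.rpow_nonneg (hc0 i j) _) (ha ▸ hA.eigenvalues_nonneg i),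
        ← Real.rpow_mul (hc0 i j), one_div_mul_cancel hp0, Real.rpow_one]
    simp only [hterm]
    rw [← Finset.sum_mul, hrow i, one_mul, ha]
  have hsumgq : ∑ x : ι × ι, ((c x.1 x.2) ^ (1/q) * b x.2) ^ q = retr (B.rpowH q) := by
    rw [retr_rpowH hB.isHermitian, Fintype.sum_prod_type, Finset.sum_comm]
    refine Finset.sum_congr rfl fun j _ => ?_
    have hterm : ∀ i, ((c i j) ^ (1/q) * b j) ^ q = c i j * b j ^ q := by
      intro i
      rw [Real.mul_rpow (Real.rpow_nonneg (hc0 i j) _) (hb ▸ hB.eigenvalues_nonneg j),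
        ← Real.rpow_mul (hc0 i j), one_div_mul_cancel hq0, Real.rpow_one]
    simp only [hterm]
    rw [← Finset.sum_mul, hcol j, one_mul, hb]
  calc retr (A * B)
      = ∑ x : ι × ι, ((c x.1 x.2) ^ (1/p) * a x.1) * ((c x.1 x.2) ^ (1/q) * b x.2) := hlhs.symm
    _ ≤ _ := happ
    _ = (retr (A.rpowH p)) ^ (1/p) * (retr (B.rpowH q)) ^ (1/q) := by rw [hsumfp, hsumgq]


lemma mul_eq_zero_of_supp {ρ σ : Matrix ι ι ℂ}
    (hsupp : ∀ v : ι → ℂ, σ.mulVec v = 0 → ρ.mulVec v = 0)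
    {M : Matrix ι ι ℂ} (h : σ * M = 0) : ρ * M = 0 := by
  ext i j
  have hcol : σ.mulVec (fun k => M k j) = 0 := by
    funext i'
    have h' : (σ * M) i' j = (0 : Matrix ι ι ℂ) i' j := by rw [h]
    simpa [Matrix.mul_apply, Matrix.mulVec, dotProduct] using h'
  have h2 := congrFun (hsupp _ hcol) i
  simpa [Matrix.mul_apply, Matrix.mulVec, dotProduct] using h2

lemma trace_sandwich_eq {ρ σ : Matrix ι ι ℂ} (hρ : ρ.PosSemidef) (hσ : σ.PosSemidef)
    (hsupp : ∀ v : ι → ℂ, σ.mulVec v = 0 → ρ.mulVec v = 0)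
    (T : Matrix ι ι ℂ) {β γ : ℝ} (hβ : β ≠ 0) (hγ : γ ≠ 0) (hβγ : β + γ = 0) :
    Matrix.trace ((σ.rpowH β * ρ * σ.rpowH β) * (σ.rpowH γ * T * σ.rpowH γ))
      = Matrix.trace (ρ * T) := by
  classical
  set U : Matrix ι ι ℂ := (hσ.isHermitian.eigenvectorUnitary : Matrix ι ι ℂ) with hU
  set l : ι → ℝ := hσ.isHermitian.eigenvalues with hl
  have hUU : star U * U = 1 := by rw [hU]; exact Unitary.coe_star_mul_self _
  have hUU' : U * star U = 1 := by rw [hU]; exact Unitary.coe_mul_star_self _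
  set e : ι → ℂ := fun i => if l i = 0 then 0 else 1 with he
  set P : Matrix ι ι ℂ := U * Matrix.diagonal e * star U with hP
  have hprod : ∀ i, ((l i ^ β : ℝ) : ℂ) * ((l i ^ γ : ℝ) : ℂ) = e i := by
    intro i
    by_cases h : l i = 0
    · simp [he, h, Real.zero_rpow hβ, Real.zero_rpow hγ]
    · have hpos : 0 < l i := lt_of_le_of_ne (hl ▸ hσ.eigenvalues_nonneg i) (Ne.symm h)
      rw [← Complex.ofReal_mul, ← Real.rpow_add hpos, hβγ, Real.rpow_zero]
      simp [he, h]
  have hprod' : ∀ i, ((l i ^ γ : ℝ) : ℂ) * ((l i ^ β : ℝ) : ℂ) = e i := fun i => by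
    rw [mul_comm]; exact hprod i
  have hrpow : ∀ p : ℝ,
      σ.rpowH p = U * Matrix.diagonal (fun i => ((l i ^ p : ℝ) : ℂ)) * star U := by
    intro p; rw [hU, hl]; exact rpowH_eq hσ.isHermitian p
  have hPβγ : σ.rpowH β * σ.rpowH γ = P := by
    rw [hrpow, hrpow, conj_mul_conj _ _ _ hUU, Matrix.diagonal_mul_diagonal, hP,
      funext hprod]
  have hPγβ : σ.rpowH γ * σ.rpowH β = P := by
    rw [hrpow, hrpow, conj_mul_conj _ _ _ hUU, Matrix.diagonal_mul_diagonal, hP,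
      funext hprod']
  have hσeq : σ = U * Matrix.diagonal (fun i => ((l i : ℝ) : ℂ)) * star U := by
    rw [hU, hl]; exact hσ.isHermitian.spectral_theorem
  have h1 : (1 : Matrix ι ι ℂ) = U * Matrix.diagonal (fun _ => (1 : ℂ)) * star U := by
    rw [Matrix.diagonal_one, Matrix.mul_one, hUU']
  have h1P : (1 : Matrix ι ι ℂ) - P = U * Matrix.diagonal (fun i => 1 - e i) * star U := by
    rw [h1, hP, ← Matrix.sub_mul, ← Matrix.mul_sub, Matrix.diagonal_sub]
  have hσP : σ * ((1 : Matrix ι ι ℂ) - P) = 0 := by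
    rw [hσeq, h1P, conj_mul_conj _ _ _ hUU, Matrix.diagonal_mul_diagonal]
    have hz : (fun i => ((l i : ℝ) : ℂ) * (1 - e i)) = fun _ => (0 : ℂ) := by
      funext i
      by_cases h : l i = 0 <;> simp [he, h]
    rw [hz, Matrix.diagonal_zero, Matrix.mul_zero, Matrix.zero_mul]
  have hρP : ρ * P = ρ := by
    have hz := mul_eq_zero_of_supp hsupp hσP
    rw [Matrix.mul_sub, Matrix.mul_one, sub_eq_zero] at hz
    exact hz.symm
  have hestar : star e = e := by
    funext i; by_cases h : l i = 0 <;> simp [he, h]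
  have hdiagstar : star (Matrix.diagonal e) = Matrix.diagonal e := by
    rw [Matrix.star_eq_conjTranspose, Matrix.diagonal_conjTranspose, hestar]
  have hPherm : star P = P := by
    rw [hP, Matrix.star_mul, star_star, Matrix.star_mul, hdiagstar, ← Matrix.mul_assoc]
  have hρstar : star ρ = ρ := hρ.isHermitian
  have hPρ : P * ρ = ρ := by
    have h3 : star (ρ * P) = star ρ := congrArg star hρP
    rw [Matrix.star_mul, hPherm, hρstar] at h3
    exact h3
  have hstep : (σ.rpowH β * ρ * σ.rpowH β) * (σ.rpowH γ * T * σ.rpowH γ)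
      = σ.rpowH β * (ρ * σ.rpowH β * σ.rpowH γ * T) * σ.rpowH γ := by
    simp only [Matrix.mul_assoc]
  rw [hstep, Matrix.trace_mul_cycle, hPγβ]
  have hM : ρ * σ.rpowH β * σ.rpowH γ * T = ρ * T := by
    rw [Matrix.mul_assoc ρ (σ.rpowH β) (σ.rpowH γ), hPβγ, hρP]
  rw [hM, ← Matrix.mul_assoc, hPρ]

end SandwichAux

/-- weighted-Hölder step towards the sandwiched variational bound.
For density operators `ρ, σ` with `supp ρ ⊆ supp σ`, `α > 1` with conjugate index
`α' = α/(α-1)`, and a positive semidefinite `T` with `Tr[ρT] > 0`: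
`Tr[ρT] ≤ exp(((α-1)/α) D_α^*(ρ‖σ)) · (Tr[(σ^{1/(2α')} T σ^{1/(2α')})^{α'}])^{1/α'}`;
equivalently,
`D_α^*(ρ‖σ) ≥ α' log Tr[ρT] - log Tr[(σ^{1/(2α')} T σ^{1/(2α')})^{α'}]`. -/
theorem sandwiched_holder_bound
    {ι : Type*} [Fintype ι] [DecidableEq ι]
    (ρ σ : Matrix ι ι ℂ)
    (hρ : ρ.PosSemidef) (hρtr : ρ.trace = 1)
    (hσ : σ.PosSemidef) (hσtr : σ.trace = 1)
    (hsupp : ∀ v : ι → ℂ, σ.mulVec v = 0 → ρ.mulVec v = 0)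
    (α : ℝ) (hα : 1 < α) (α' : ℝ) (hα' : α' = α / (α - 1))
    (T : Matrix ι ι ℂ) (hT : T.PosSemidef) (hTρ : 0 < retr (ρ * T)) :
    retr (ρ * T) ≤
      Real.exp ((α - 1) / α * sandwichedRenyiDiv α ρ σ) *
        (retr (Matrix.rpowH
          (Matrix.rpowH σ (1 / (2 * α')) * T * Matrix.rpowH σ (1 / (2 * α'))) α'))
          ^ (1 / α') ∧
    α' * Real.log (retr (ρ * T)) -
        Real.log (retr (Matrix.rpowH
          (Matrix.rpowH σ (1 / (2 * α')) * T * Matrix.rpowH σ (1 / (2 * α'))) α')) ≤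
      sandwichedRenyiDiv α ρ σ := by
  have hα0 : (0:ℝ) < α := lt_trans one_pos hα
  have hα1 : (0:ℝ) < α - 1 := by linarith
  have hαne : α ≠ 0 := hα0.ne'
  have hα1ne : α - 1 ≠ 0 := hα1.ne'
  have hα'pos : 0 < α' := by rw [hα']; positivity
  have hconj : Real.HolderConjugate α α' := by
    refine Real.holderConjugate_iff.mpr ⟨hα, ?_⟩
    rw [hα', inv_div, inv_eq_one_div, ← add_div, div_eq_one_iff_eq hαne]
    ring
  set β : ℝ := (1 - α) / (2 * α) with hβdef
  set γ : ℝ := 1 / (2 * α') with hγdef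
  have hβneg : β < 0 := by
    rw [hβdef]
    exact div_neg_of_neg_of_pos (by linarith) (by linarith)
  have hβne : β ≠ 0 := hβneg.ne
  have hγpos : 0 < γ := by rw [hγdef]; positivity
  have hβγ : β + γ = 0 := by
    rw [hβdef, hγdef, hα']
    field_simp
    ring
  set A' : Matrix ι ι ℂ := Matrix.rpowH σ β * ρ * Matrix.rpowH σ β with hA'def
  set B' : Matrix ι ι ℂ := Matrix.rpowH σ γ * T * Matrix.rpowH σ γ with hB'def
  have hSβ := SandwichAux.rpowH_posSemidef hσ β
  have hSγ := SandwichAux.rpowH_posSemidef hσ γ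
  have hA' : A'.PosSemidef := by
    rw [hA'def]
    have h := hρ.mul_mul_conjTranspose_same (Matrix.rpowH σ β)
    rwa [hSβ.isHermitian.eq] at h
  have hB' : B'.PosSemidef := by
    rw [hB'def]
    have h := hT.mul_mul_conjTranspose_same (Matrix.rpowH σ γ)
    rwa [hSγ.isHermitian.eq] at h
  set tA : ℝ := retr (Matrix.rpowH A' α) with htAdef
  set tB : ℝ := retr (Matrix.rpowH B' α') with htBdef
  have hD : sandwichedRenyiDiv α ρ σ = (α - 1)⁻¹ * Real.log tA := by
    rw [htAdef, hA'def, hβdef]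
    rfl
  have htrace : retr (ρ * T) = retr (A' * B') := by
    rw [retr, retr, hA'def, hB'def,
      SandwichAux.trace_sandwich_eq hρ hσ hsupp T hβne hγpos.ne' hβγ]
  have hholder : retr (A' * B') ≤ tA ^ (1/α) * tB ^ (1/α') := by
    rw [htAdef, htBdef]
    exact SandwichAux.trace_holder hA' hB' hconj
  have htA0 : 0 ≤ tA := by rw [htAdef]; exact SandwichAux.retr_rpowH_nonneg hA' α
  have htB0 : 0 ≤ tB := by rw [htBdef]; exact SandwichAux.retr_rpowH_nonneg hB' α'
  have hposAB : 0 < retr (A' * B') := htrace ▸ hTρ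
  have htApos : 0 < tA := by
    rcases htA0.eq_or_lt with h | h
    · exfalso
      rw [← h, Real.zero_rpow (one_div_ne_zero hαne), zero_mul] at hholder
      linarith
    · exact h
  have htBpos : 0 < tB := by
    rcases htB0.eq_or_lt with h | h
    · exfalso
      rw [← h, Real.zero_rpow (one_div_ne_zero hα'pos.ne'), mul_zero] at hholder
      linarith
    · exact h
  have hmain : retr (ρ * T) ≤ tA ^ (1/α) * tB ^ (1/α') := by
    rw [htrace]; exact hholder
  have hexp : Real.exp ((α - 1) / α * sandwichedRenyiDiv α ρ σ) = tA ^ (1/α) := by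
    rw [hD, Real.rpow_def_of_pos htApos]
    congr 1
    field_simp
  constructor
  · rw [hexp]
    exact hmain
  · have hlog : Real.log (retr (ρ * T)) ≤ (1/α) * Real.log tA + (1/α') * Real.log tB := by
      calc Real.log (retr (ρ * T)) ≤ Real.log (tA ^ (1/α) * tB ^ (1/α')) :=
            Real.log_le_log hTρ hmain
        _ = (1/α) * Real.log tA + (1/α') * Real.log tB := by
            rw [Real.log_mul (Real.rpow_pos_of_pos htApos _).ne'
              (Real.rpow_pos_of_pos htBpos _).ne', Real.log_rpow htApos, Real.log_rpow htBpos]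
    have hk1 : α' * (1/α) = (α - 1)⁻¹ := by
      rw [hα']
      field_simp
    have hk2 : α' * (1/α') = 1 := mul_one_div_cancel hα'pos.ne'
    have hmul := mul_le_mul_of_nonneg_left hlog hα'pos.le
    rw [mul_add, ← mul_assoc, ← mul_assoc, hk1, hk2, one_mul] at hmul
    rw [hD]
    linarith


end
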